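/- Let T be a rooted tree on vertex set V given by a parent function P (with P(r) = r for the root r and every vertex reaching r by iterating P). Let u ∈ V be a non-root vertex with path u = w₀, w₁, ..., w_k = r to the root. Define the path-halving operation: for i = 0, 2, 4, ..., set P'(w_i) = P(P(w_i)), leaving all other parent values unchanged. Then P' is still an acyclic parent function with the same root r for every vertex, the tree-partition is unchanged, and the path from u to r under P' has length ⌈k/2⌉. -/
import Mathlib


/-- Path halving.  Let `P` be a parent function of a rooted tree with root `r`
(`P r = r` and every vertex reaches `r` by iterating `P`), and let `u ≠ r` have
root-path `u = P^[0] u, P^[1] u, …, P^[k] u = r` (of length `k`, i.e. no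
earlier iterate is `r`).  Let `P'` set the parent of every even-indexed vertex
on this path to its grandparent, leaving all other parents unchanged.  Then
`P'` is still an acyclic parent function with root `r` for every vertex, and
the path from `u` to `r` under `P'` has length `⌈k/2⌉`. -/
theorem path_halving_correct {V : Type*} (P P' : V → V) (r : V)
    (hr : P r = r)
    (hall : ∀ v, ∃ n, P^[n] v = r)
    (u : V) (hu : u ≠ r) (k : ℕ)
    (hk : P^[k] u = r) (hkmin : ∀ i < k, P^[i] u ≠ r)
    (hP'even : ∀ x, (∃ i, Even i ∧ i < k ∧ x = P^[i] u) → P' x = P (P x))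
    (hP'other : ∀ x, ¬ (∃ i, Even i ∧ i < k ∧ x = P^[i] u) → P' x = P x) :
    (P' r = r) ∧ (∀ v, ∃ n, P'^[n] v = r) ∧
    (P'^[(k + 1) / 2] u = r ∧ ∀ m < (k + 1) / 2, P'^[m] u ≠ r) := by
  have hk0 : k ≠ 0 := by
    intro h; subst h; exact hu hk
  have hstep : ∀ v, P' v = P v ∨ P' v = P (P v) := by
    intro v
    by_cases h : ∃ i, Even i ∧ i < k ∧ v = P^[i] u
    · exact Or.inr (hP'even v h)
    · exact Or.inl (hP'other v h)
  have hr' : P' r = r := by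
    rw [hP'other r, hr]
    rintro ⟨i, _, hik, hir⟩
    exact hkmin i hik hir.symm
  have hall' : ∀ n v, P^[n] v = r → ∃ m, P'^[m] v = r := by
    intro n
    induction n with
    | zero => intro v h; exact ⟨0, h⟩
    | succ n ih =>
      intro v h
      have hv : P^[n] (P v) = r := by
        rw [← Function.iterate_succ_apply]; exact h
      have h2 : P^[n] (P' v) = r := by
        rcases hstep v with h1 | h1
        · rw [h1]; exact hv
        · rw [h1, ← Function.iterate_succ_apply, Function.iterate_succ_apply', hv, hr]
      obtain ⟨m, hm⟩ := ih _ h2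
      exact ⟨m + 1, by rw [Function.iterate_succ_apply]; exact hm⟩
  have claimA : ∀ m, m ≤ (k + 1) / 2 → P'^[m] u = P^[2 * m] u := by
    intro m
    induction m with
    | zero => intro _; simp
    | succ m ih =>
      intro hm
      have hmle : m ≤ (k + 1) / 2 := by omega
      have h2m : 2 * m < k := by omega
      have hih := ih hmle
      have heq : 2 * (m + 1) = 2 * m + 1 + 1 := by ring
      rw [Function.iterate_succ_apply', hih,
        hP'even _ ⟨2 * m, ⟨m, two_mul m⟩, h2m, rfl⟩,
        heq, Function.iterate_succ_apply', Function.iterate_succ_apply']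
  refine ⟨hr', fun v => (hall v).elim (fun n hn => hall' n v hn), ?_, ?_⟩
  · have h2c : 2 * ((k + 1) / 2) = k ∨ 2 * ((k + 1) / 2) = k + 1 := by omega
    rcases h2c with h | h
    · rw [claimA _ le_rfl, h]; exact hk
    · rw [claimA _ le_rfl, h, Function.iterate_succ_apply', hk, hr]
  · intro m hm
    rw [claimA m (le_of_lt hm)]
    exact hkmin (2 * m) (by omega)
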